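/- Let ⫝ be a G-invariant ternary relation on subsets of a set X (G a group acting on X) satisfying full existence (for all A,B,C there is σ ∈ Stab(C) with σ(A) ⫝_C B) and right transitivity (A ⫝_C B together with A ⫝_{B∪C} D implies A ⫝_C (B ∪ D), for B ⊆ B∪C etc.). Then ⫝ satisfies extension: if A ⫝_C B and B ⊆ D, then there exists σ ∈ Stab(B∪C) such that σ(A) ⫝_C D. -/
import Mathlib


/-- Fact 4.2(b): an invariant ternary relation satisfying full existence and right
transitivity satisfies extension. -/
theorem extension_of_full_existence {X G : Type*} [Group G] [MulAction G X]
    (ind : Set X → Set X → Set X → Prop)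
    (hinv : ∀ (σ : G) (A C B : Set X), ind A C B →
      ind ((fun x => σ • x) '' A) ((fun x => σ • x) '' C) ((fun x => σ • x) '' B))
    (hfull : ∀ A B C : Set X, ∃ σ : G, (∀ x ∈ C, σ • x = x) ∧
      ind ((fun x => σ • x) '' A) C B)
    (htrans : ∀ A B C D : Set X, ind A C B → ind A (B ∪ C) D → ind A C (D ∪ B)) :
    ∀ A B C D : Set X, ind A C B → B ⊆ D →
      ∃ σ : G, (∀ x ∈ B ∪ C, σ • x = x) ∧ ind ((fun x => σ • x) '' A) C D := by
  intro A B C D hAB hBD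
  obtain ⟨σ, hfix, hind⟩ := hfull A D (B ∪ C)
  refine ⟨σ, hfix, ?_⟩
  have himg : ∀ S : Set X, S ⊆ B ∪ C → (fun x => σ • x) '' S = S := by
    intro S hS
    ext x
    constructor
    · rintro ⟨y, hy, rfl⟩
      simpa [hfix y (hS hy)]
    · intro hx
      exact ⟨x, hx, hfix x (hS hx)⟩
  have h1 : ind ((fun x => σ • x) '' A) C B := by
    have := hinv σ A C B hAB
    rwa [himg C Set.subset_union_right, himg B Set.subset_union_left] at this
  have h2 := htrans _ B C D h1 hind
  rwa [Set.union_eq_self_of_subset_right hBD] at h2
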